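/- arXiv:2309.11912 — 3 statements merged into one kernel-verified Lean document; each statement's English description precedes it below -/
import Mathlib

section
/- Let φ, φ′ : E → E′ be isogenies of elliptic curves of the same degree d ≥ 2, and let N′ > d be an integer coprime to the characteristic. If φ and φ′ agree on the N′-torsion subgroup E[N′], then φ = φ′. -/
/-- Two isogenies of the same degree `d ≥ 2` agreeing on the `N'`-torsion
with `N' > d` are equal. `Hom(E, E')` is abstracted as the group of additive maps,
with a degree function `deg` which is positive definite (`hdeg_zero`), satisfies the
Cauchy–Schwarz consequence `deg (φ - ψ) ≤ (√deg φ + √deg ψ)²` (`hCS`), and such that a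
nonzero isogeny killing all of `E[N']` has degree divisible by `N'²` (`hker`). -/
theorem isogenies_agreeing_on_torsion_eq
    {E E' : Type*} [AddCommGroup E] [AddCommGroup E']
    (deg : (E →+ E') → ℕ) (d N' : ℕ)
    (hdeg_zero : ∀ ψ : E →+ E', deg ψ = 0 ↔ ψ = 0)
    (hCS : ∀ φ ψ : E →+ E',
      (deg (φ - ψ) : ℝ) ≤ (Real.sqrt (deg φ) + Real.sqrt (deg ψ)) ^ 2)
    (hker : ∀ ψ : E →+ E', ψ ≠ 0 → (∀ P : E, N' • P = 0 → ψ P = 0) →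
      N' ^ 2 ∣ deg ψ)
    (φ φ' : E →+ E')
    (hd : 2 ≤ d) (hφ : deg φ = d) (hφ' : deg φ' = d) (hN' : d < N')
    (hagree : ∀ P : E, N' • P = 0 → φ P = φ' P) :
    φ = φ' := by
  by_contra hne
  have hψne : φ - φ' ≠ 0 := sub_ne_zero.mpr hne
  have hvan : ∀ P : E, N' • P = 0 → (φ - φ') P = 0 := by
    intro P hP
    simp [hagree P hP]
  have hdvd := hker _ hψne hvan
  have hpos : 0 < deg (φ - φ') := by
    rcases Nat.eq_zero_or_pos (deg (φ - φ')) with h | h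
    · exact absurd ((hdeg_zero _).mp h) hψne
    · exact h
  have hle : N' ^ 2 ≤ deg (φ - φ') := Nat.le_of_dvd hpos hdvd
  have hCS' := hCS φ φ'
  rw [hφ, hφ'] at hCS'
  have hsq : (Real.sqrt d + Real.sqrt d) ^ 2 = 4 * d := by
    have : Real.sqrt d * Real.sqrt d = d := Real.mul_self_sqrt (by positivity)
    ring_nf
    nlinarith [this]
  rw [hsq] at hCS'
  have hle4 : deg (φ - φ') ≤ 4 * d := by exact_mod_cast hCS'
  have h1 : d + 1 ≤ N' := hN'
  nlinarith [hle, hle4, h1, hd]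
end

section
/- Let A, B be principally polarised abelian varieties of dimension g and suppose φ₁ : A → A₁ is a d₁-isogeny, φ₂ : A → A₂ is a d₂-isogeny, φ₁′ : A₁ → B is a d₂-isogeny, φ₂′ : A₂ → B is a d₁-isogeny with φ₁′ ∘ φ₁ = φ₂′ ∘ φ₂. Then the map F : A × B → A₁ × A₂ with matrix form [[φ₁, φ̃₁′], [−φ₂, φ̃₂′]] satisfies F̃ ∘ F = [d₁ + d₂] on A × B, where F̃ is the dual of F with respect to the product polarisations. -/
/-- Kani: Given a commuting square `φ₁' ∘ φ₁ = φ₂' ∘ φ₂` of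
`d₁`- and `d₂`-isogenies of principally polarised abelian varieties (abstracted as
additive groups, each isogeny coming with its polarised dual satisfying
`ψ̃ ∘ ψ = [deg ψ]` and `ψ ∘ ψ̃ = [deg ψ]`, and the dual commuting square), the map
`F : A × B → A₁ × A₂` with matrix `[[φ₁, φ̃₁'], [-φ₂, φ̃₂']]` satisfies
`F̃ ∘ F = [d₁ + d₂]`, where `F̃` has matrix `[[φ̃₁, -φ̃₂], [φ₁', φ₂']]`. -/
theorem kani_isogeny_diamond
    {A A₁ A₂ B : Type*} [AddCommGroup A] [AddCommGroup A₁]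
    [AddCommGroup A₂] [AddCommGroup B]
    (d₁ d₂ : ℕ)
    (φ₁ : A →+ A₁) (φ₁t : A₁ →+ A)
    (φ₂ : A →+ A₂) (φ₂t : A₂ →+ A)
    (φ₁' : A₁ →+ B) (φ₁'t : B →+ A₁)
    (φ₂' : A₂ →+ B) (φ₂'t : B →+ A₂)
    (hφ₁ : φ₁t.comp φ₁ = d₁ • AddMonoidHom.id A)
    (hφ₁' : φ₁.comp φ₁t = d₁ • AddMonoidHom.id A₁)
    (hφ₂ : φ₂t.comp φ₂ = d₂ • AddMonoidHom.id A)
    (hφ₂' : φ₂.comp φ₂t = d₂ • AddMonoidHom.id A₂)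
    (hφ₁'iso : φ₁'t.comp φ₁' = d₂ • AddMonoidHom.id A₁)
    (hφ₁'iso' : φ₁'.comp φ₁'t = d₂ • AddMonoidHom.id B)
    (hφ₂'iso : φ₂'t.comp φ₂' = d₁ • AddMonoidHom.id A₂)
    (hφ₂'iso' : φ₂'.comp φ₂'t = d₁ • AddMonoidHom.id B)
    (hcomm : φ₁'.comp φ₁ = φ₂'.comp φ₂)
    (hcomm_dual : φ₁t.comp φ₁'t = φ₂t.comp φ₂'t)
    (F : A × B →+ A₁ × A₂) (Ft : A₁ × A₂ →+ A × B)
    (hF : ∀ (a : A) (b : B), F (a, b) = (φ₁ a + φ₁'t b, -φ₂ a + φ₂'t b))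
    (hFt : ∀ (x : A₁) (y : A₂), Ft (x, y) = (φ₁t x - φ₂t y, φ₁' x + φ₂' y)) :
    Ft.comp F = (d₁ + d₂) • AddMonoidHom.id (A × B) := by
  ext ⟨a, b⟩ : 1
  have h1 := DFunLike.congr_fun hφ₁ a
  have h2 := DFunLike.congr_fun hφ₂ a
  have h3 := DFunLike.congr_fun hφ₁'iso (φ₁ a)
  have h4 := DFunLike.congr_fun hφ₂'iso (φ₂ a)
  have h5 := DFunLike.congr_fun hcomm a
  have h6 := DFunLike.congr_fun hcomm_dual b
  have h7 := DFunLike.congr_fun hφ₁'iso' b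
  have h8 := DFunLike.congr_fun hφ₂'iso' b
  simp only [AddMonoidHom.comp_apply, AddMonoidHom.smul_apply, AddMonoidHom.id_apply] at *
  simp only [hF, hFt, map_add, map_neg, map_sub]
  ext
  · simp only [Prod.fst, Prod.smul_fst]
    rw [h1, h6]
    simp only [h2, add_smul]
    abel
  · simp only [Prod.snd, Prod.smul_snd]
    simp only [h5, h7, h8, add_smul]
    abel
end

section
/- Let ι : ℤ[α] ↪ End(E) be an embedding of a quadratic order into the endomorphism ring of a supersingular elliptic curve E, with θ = ι(α) and t = Tr(α). For any prime ℓ and exponent such that m | f_α (m an integer dividing the conductor of ℤ[α]), the order ℤ[(f_α/m)√Δ_K] embeds into End(E) extending ι if and only if the endomorphism 2θ − [t] is divisible by m in End(E). -/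
/-- Let `θ = ι(α)` in the (torsion-free) endomorphism ring `R` of a
supersingular elliptic curve, with `t = Tr(α)`, so `(2θ - t)² = f_α² Δ_K` in `R`.
For an integer `m ∣ f_α`, the order `ℤ[(f_α/m)√Δ_K]` embeds into `R` extending `ι`
(i.e. there is `ρ ∈ R` with `ρ² = (f_α/m)² Δ_K` and `m ρ = 2θ - t`) if and only if
`2θ - [t]` is divisible by `m` in `R`. -/
theorem order_embeds_iff_divisible
    {R : Type*} [Ring R]
    (htf : ∀ (k : ℤ) (x : R), k ≠ 0 → k • x = 0 → x = 0)
    (θ : R) (t fα ΔK m : ℤ) (hm : m ∣ fα) (hm0 : m ≠ 0)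
    (hθ : ((2 : ℤ) • θ - t • (1 : R)) ^ 2 = (fα ^ 2 * ΔK) • (1 : R)) :
    (∃ ρ : R, ρ ^ 2 = ((fα / m) ^ 2 * ΔK) • (1 : R) ∧
        m • ρ = (2 : ℤ) • θ - t • (1 : R)) ↔
      ∃ ρ : R, m • ρ = (2 : ℤ) • θ - t • (1 : R) := by
  constructor
  · rintro ⟨ρ, _, h⟩; exact ⟨ρ, h⟩
  · rintro ⟨ρ, h⟩
    refine ⟨ρ, ?_, h⟩
    obtain ⟨c, rfl⟩ := hm
    rw [Int.mul_ediv_cancel_left _ hm0]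
    have key : (m ^ 2 : ℤ) • (ρ ^ 2 - (c ^ 2 * ΔK) • (1 : R)) = 0 := by
      have h2 : (m • ρ) ^ 2 = ((m * c) ^ 2 * ΔK) • (1 : R) := by rw [h]; exact hθ
      rw [smul_pow] at h2
      have : (m ^ 2 : ℤ) • ρ ^ 2 = (m ^ 2 * (c ^ 2 * ΔK)) • (1 : R) := by
        rw [h2]; congr 1; ring
      rw [smul_sub, this, mul_smul]
      simp
    exact sub_eq_zero.mp (htf (m ^ 2) _ (pow_ne_zero 2 hm0) key)
end
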